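/- For every κ > 0 and every x ∈ [0, 2π], the two-sided series ∑_{m ∈ ℤ} e^{imx}/(2π(m² + κ²)) converges, with sum equal to cosh(κ(π − x))/(2κ sinh(πκ)). -/

import Mathlib

open Complex Real Set intervalIntegral

noncomputable def gfun (κ : ℝ) : ℝ → ℂ :=
  fun y => ((Real.cosh (κ * (π - y)) / (2 * κ * Real.sinh (π * κ)) : ℝ) : ℂ)

lemma gfun_endpoints (κ : ℝ) : gfun κ 0 = gfun κ (2*π) := by
  unfold gfun
  rw [show κ*(π-2*π) = -(κ*(π-0)) by ring, Real.cosh_neg]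

lemma key_deriv (κ : ℝ) (n : ℤ) (hd : ((n:ℂ)^2 + (κ:ℂ)^2) ≠ 0) (x : ℝ) :
    HasDerivAt (fun y : ℝ => Complex.exp (-Complex.I * n * y) *
        (-(κ:ℂ) * Complex.sinh (κ * ((π:ℂ) - y)) + Complex.I * n * Complex.cosh (κ * ((π:ℂ) - y)))
        / ((n:ℂ)^2 + (κ:ℂ)^2))
      (Complex.exp (-Complex.I * n * x) * Complex.cosh ((κ:ℂ) * ((π:ℂ) - x))) x := by
  have key : ∀ z : ℂ, HasDerivAt (fun z : ℂ => Complex.exp (-Complex.I * n * z) *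
        (-(κ:ℂ) * Complex.sinh (κ * ((π:ℂ) - z)) + Complex.I * n * Complex.cosh (κ * ((π:ℂ) - z)))
        / ((n:ℂ)^2 + (κ:ℂ)^2))
      (Complex.exp (-Complex.I * n * z) * Complex.cosh ((κ:ℂ) * ((π:ℂ) - z))) z := by
    intro z
    have h1 : HasDerivAt (fun z : ℂ => Complex.exp (-Complex.I * n * z))
        (-Complex.I * n * Complex.exp (-Complex.I * n * z)) z := by
      simpa [mul_comm] using ((hasDerivAt_id z).const_mul (-Complex.I * n)).cexp
    have h2 : HasDerivAt (fun z : ℂ => (κ:ℂ) * ((π:ℂ) - z)) (-(κ:ℂ)) z := by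
      simpa using ((hasDerivAt_const z (π:ℂ)).sub (hasDerivAt_id z)).const_mul (κ:ℂ)
    have h3 := (h2.csinh.const_mul (-(κ:ℂ)))
    have h4 := (h2.ccosh.const_mul (Complex.I * n))
    have h5 := (h1.mul (h3.add h4)).div_const ((n:ℂ)^2 + (κ:ℂ)^2)
    refine h5.congr_deriv ?_
    simp only [Pi.add_apply]
    rw [div_eq_iff hd]
    linear_combination -(Complex.exp (-Complex.I * n * z) * Complex.cosh ((κ:ℂ) * ((π:ℂ) - z)) * (n:ℂ)^2) * Complex.I_sq
  exact (key x).comp_ofReal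

lemma key_integral (κ : ℝ) (hκ : 0 < κ) (n : ℤ) :
    ∫ y in (0:ℝ)..(2*π), Complex.exp (-Complex.I * n * y) * Complex.cosh ((κ:ℂ) * ((π:ℂ) - y)) =
      2 * κ * Complex.sinh ((π:ℂ) * κ) / ((n:ℂ)^2 + (κ:ℂ)^2) := by
  have hd : ((n:ℂ)^2 + (κ:ℂ)^2) ≠ 0 := by
    have : (0:ℝ) < (n:ℝ)^2 + κ^2 := by positivity
    intro h
    rw [show ((n:ℂ)^2 + (κ:ℂ)^2) = (((n:ℝ)^2 + κ^2 : ℝ) : ℂ) by push_cast; ring] at h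
    exact_mod_cast this.ne' (Complex.ofReal_eq_zero.mp h)
  rw [intervalIntegral.integral_eq_sub_of_hasDerivAt (f := fun y : ℝ =>
      Complex.exp (-Complex.I * n * y) *
        (-(κ:ℂ) * Complex.sinh (κ * ((π:ℂ) - y)) + Complex.I * n * Complex.cosh (κ * ((π:ℂ) - y)))
        / ((n:ℂ)^2 + (κ:ℂ)^2)) (fun y _ => key_deriv κ n hd y) ?_]
  · have he : Complex.exp (-Complex.I * n * ((2*π : ℝ) : ℂ)) = 1 := by
      rw [show -Complex.I * n * ((2*π : ℝ) : ℂ) = (-n : ℤ) * (2 * π * Complex.I) by push_cast; ring]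
      exact Complex.exp_int_mul_two_pi_mul_I (-n)
    rw [he]
    have h1 : (κ:ℂ) * ((π:ℂ) - ((2*π:ℝ):ℂ)) = -((π:ℂ) * κ) := by push_cast; ring
    have h2 : (κ:ℂ) * ((π:ℂ) - ((0:ℝ):ℂ)) = (π:ℂ) * κ := by push_cast; ring
    rw [h1, h2, Complex.sinh_neg, Complex.cosh_neg]
    simp only [Complex.ofReal_zero, mul_zero, Complex.exp_zero]
    field_simp
    ring
  · apply Continuous.intervalIntegrable
    continuity

lemma coeff_eq (κ : ℝ) (hκ : 0 < κ) (n : ℤ) :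
    haveI : Fact (0 < 2*π) := ⟨by positivity⟩
    fourierCoeff (AddCircle.liftIco (2*π) 0 (gfun κ)) n
      = 1 / (2 * (π:ℂ) * ((n:ℂ)^2 + (κ:ℂ)^2)) := by
  haveI : Fact (0 < 2*π) := ⟨by positivity⟩
  have hd : ((n:ℂ)^2 + (κ:ℂ)^2) ≠ 0 := by
    have h : (0:ℝ) < (n:ℝ)^2 + κ^2 := by positivity
    intro h'
    rw [show ((n:ℂ)^2 + (κ:ℂ)^2) = (((n:ℝ)^2 + κ^2 : ℝ) : ℂ) by push_cast; ring] at h'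
    exact_mod_cast h.ne' (Complex.ofReal_eq_zero.mp h')
  have hs : Real.sinh (π * κ) > 0 := Real.sinh_pos_iff.mpr (by positivity)
  have hc : ((2 * κ * Real.sinh (π * κ) : ℝ) : ℂ) ≠ 0 := by
    exact_mod_cast (by positivity : (0:ℝ) < 2 * κ * Real.sinh (π * κ)).ne'
  rw [fourierCoeff_liftIco_eq, fourierCoeffOn_eq_integral]
  have harg : ∀ y : ℝ, (fourier (-n) (y : AddCircle (0 + 2*π - 0)) : ℂ) • gfun κ y
      = (1 / ((2 * κ * Real.sinh (π * κ) : ℝ) : ℂ)) *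
        (Complex.exp (-Complex.I * n * y) * Complex.cosh ((κ:ℂ) * ((π:ℂ) - y))) := by
    intro y
    rw [smul_eq_mul, fourier_coe_apply]
    have h2π : ((0:ℝ) + 2*π - 0 : ℝ) = 2*π := by ring
    rw [h2π]
    have hπ' : (π:ℂ) ≠ 0 := by
      exact_mod_cast Real.pi_pos.ne'
    have : 2 * (π:ℂ) * Complex.I * (-n : ℤ) * y / ((2*π : ℝ):ℂ) = -Complex.I * n * y := by
      push_cast
      field_simp
    rw [this]
    unfold gfun
    push_cast
    ring
  simp only [harg]
  rw [intervalIntegral.integral_const_mul]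
  have h2π : ((0:ℝ) + 2*π : ℝ) = 2*π := by ring
  rw [show (0:ℝ) + 2*π = 2*π by ring, key_integral κ hκ n]
  have hsc : Complex.sinh ((π:ℂ) * κ) = ((Real.sinh (π * κ) : ℝ) : ℂ) := by
    push_cast
    ring_nf
  rw [hsc]
  have hπ' : (π:ℂ) ≠ 0 := by
    exact_mod_cast Real.pi_pos.ne'
  rw [show ((2:ℝ)*π - 0 : ℝ) = 2*π by ring]
  rw [Complex.real_smul]
  push_cast
  have hsc' : ((Real.sinh (π * κ) : ℝ) : ℂ) ≠ 0 := by
    exact_mod_cast hs.ne'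
  have hS : Complex.sinh ((π:ℂ) * (κ:ℂ)) ≠ 0 := by rw [hsc]; exact hsc'
  have hκ' : (κ:ℂ) ≠ 0 := by exact_mod_cast hκ.ne'
  field_simp [hπ', hκ', hS, hd]

lemma summable_coeff (κ : ℝ) (hκ : 0 < κ) :
    Summable (fun n : ℤ => 1 / (2 * (π:ℂ) * ((n:ℂ)^2 + (κ:ℂ)^2))) := by
  apply Summable.of_norm_bounded_eventually (g := fun n : ℤ => 1 / (n:ℝ)^2)
  · exact (Real.summable_one_div_int_pow).mpr one_lt_two
  · have : {n : ℤ | ¬ ‖1 / (2 * (π:ℂ) * ((n:ℂ)^2 + (κ:ℂ)^2))‖ ≤ 1 / (n:ℝ)^2} ⊆ {0} := by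
      intro n hn
      simp only [mem_setOf_eq] at hn
      by_contra h0
      apply hn
      have hn2 : (0:ℝ) < (n:ℝ)^2 := by
        have : (n:ℝ) ≠ 0 := Int.cast_ne_zero.mpr (by simpa using h0)
        positivity
      have hcast : (2 * (π:ℂ) * ((n:ℂ)^2 + (κ:ℂ)^2))
          = (((2 * π * ((n:ℝ)^2 + κ^2)) : ℝ) : ℂ) := by push_cast; ring
      rw [hcast, norm_div, Complex.norm_real, norm_one]
      rw [Real.norm_eq_abs, abs_of_pos (by positivity)]
      apply one_div_le_one_div_of_le hn2
      nlinarith [Real.pi_gt_three, sq_nonneg (κ:ℝ)]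
    exact Filter.eventually_cofinite.mpr ((Set.finite_singleton 0).subset this)

/-- For every κ > 0 and every x ∈ [0, 2π], the two-sided series
∑_{m ∈ ℤ} e^{imx}/(2π(m² + κ²)) converges, with sum equal to
cosh(κ(π − x))/(2κ sinh(πκ)). -/
theorem circle_resolvent_kernel_hasSum (κ : ℝ) (hκ : 0 < κ) (x : ℝ)
    (hx : x ∈ Set.Icc (0 : ℝ) (2 * Real.pi)) :
    HasSum
      (fun m : ℤ =>
        Complex.exp (Complex.I * (m : ℂ) * (x : ℂ)) /
          (2 * (Real.pi : ℂ) * ((m : ℂ) ^ 2 + (κ : ℂ) ^ 2)))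
      ((Real.cosh (κ * (Real.pi - x)) / (2 * κ * Real.sinh (Real.pi * κ)) : ℝ) : ℂ) := by
  haveI : Fact (0 < 2*π) := ⟨by positivity⟩
  have hcont : Continuous (AddCircle.liftIco (2*π) 0 (gfun κ)) := by
    apply AddCircle.liftIco_zero_continuous
    · exact gfun_endpoints κ
    · unfold gfun; fun_prop
  set F : C(AddCircle (2*π), ℂ) := ⟨_, hcont⟩ with hF
  have hco : ∀ n : ℤ, fourierCoeff (F : AddCircle (2*π) → ℂ) n
      = 1 / (2 * (π:ℂ) * ((n:ℂ)^2 + (κ:ℂ)^2)) := fun n => coeff_eq κ hκ n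
  have hsummable : Summable (fourierCoeff (F : AddCircle (2*π) → ℂ)) := by
    apply (summable_coeff κ hκ).congr
    intro n; exact (hco n).symm
  have H := has_pointwise_sum_fourier_series_of_summable hsummable (x : AddCircle (2*π))
  have hterm : (fun i : ℤ => fourierCoeff (F : AddCircle (2*π) → ℂ) i •
        fourier i (x : AddCircle (2*π)))
      = fun m : ℤ => Complex.exp (Complex.I * (m : ℂ) * (x : ℂ)) /
          (2 * (Real.pi : ℂ) * ((m : ℂ) ^ 2 + (κ : ℂ) ^ 2)) := by
    funext m
    rw [hco m, smul_eq_mul, fourier_coe_apply]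
    have hπ' : (π:ℂ) ≠ 0 := by exact_mod_cast Real.pi_pos.ne'
    rw [show 2 * (π:ℂ) * Complex.I * (m:ℂ) * (x:ℂ) / ((2*π : ℝ):ℂ)
        = Complex.I * m * x by push_cast; field_simp]
    ring
  have hFx : F (x : AddCircle (2*π)) = gfun κ x := by
    rcases eq_or_lt_of_le hx.2 with h2 | h2
    · have : ((x : ℝ) : AddCircle (2*π)) = ((0:ℝ) : AddCircle (2*π)) := by
        rw [← h2]
        simpa using AddCircle.coe_period (p := 2*π)
      rw [this]
      show AddCircle.liftIco (2*π) 0 (gfun κ) ((0:ℝ) : AddCircle (2*π)) = gfun κ x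
      rw [AddCircle.liftIco_zero_coe_apply (by constructor <;> [rfl; positivity])]
      rw [gfun_endpoints κ, ← h2]
    · show AddCircle.liftIco (2*π) 0 (gfun κ) ((x:ℝ) : AddCircle (2*π)) = gfun κ x
      exact AddCircle.liftIco_zero_coe_apply ⟨hx.1, h2⟩
  rw [hterm, hFx] at H
  exact H
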